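/- Suppose Q : ℕ → ℕ satisfies S(k) = S(k−1) + S(Q(k)) for every k ≥ 1 (i.e., S admits the kneading map Q). Then Ω = { ω ∈ {0,1}^ℕ : for every j, if ω(j) = 1 then ω(i) = 0 for all i with Q(j+1) ≤ i ≤ j−1 }. -/

import Mathlib

/-- Let `S : ℕ → ℕ` be strictly increasing with `S 0 = 1` and
`S (j+1) ≤ 2 * S j`, and suppose `Q : ℕ → ℕ` satisfies `S k = S (k-1) + S (Q k)` for all
`k ≥ 1` (the kneading map).  Then
`Ω = { ω : for every j, if ω j = 1 then ω i = 0 for all i with Q (j+1) ≤ i ≤ j-1 }`.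
(The condition `Q (j+1) ≤ i ≤ j-1` is rendered as `Q (j+1) ≤ i` and `i < j`.) -/
theorem stmt_3 (S : ℕ → ℕ) (hS : StrictMono S) (hS0 : S 0 = 1)
    (hS2 : ∀ j, S (j + 1) ≤ 2 * S j)
    (Q : ℕ → ℕ) (hQ : ∀ k, 1 ≤ k → S k = S (k - 1) + S (Q k)) :
    {ω : ℕ → Bool | ∀ j, ∑ i ∈ Finset.range (j + 1), (ω i).toNat * S i < S (j + 1)}
      = {ω : ℕ → Bool | ∀ j, ω j = true →
          ∀ i, Q (j + 1) ≤ i → i < j → ω i = false} := by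
  have hSkey : ∀ k, S (k + 1) = S k + S (Q (k + 1)) := by
    intro k
    simpa using hQ (k + 1) (Nat.le_add_left 1 k)
  ext ω
  simp only [Set.mem_setOf_eq]
  constructor
  · intro hΩ j hj i hQi hij
    by_contra hω
    have hωi : (ω i).toNat = 1 := by
      cases h : ω i with
      | false => exact absurd h hω
      | true => simp [h]
    have hij' : i ≠ j := Nat.ne_of_lt hij
    have hsub : ({i, j} : Finset ℕ) ⊆ Finset.range (j + 1) := by
      intro x hx
      simp only [Finset.mem_insert, Finset.mem_singleton] at hx
      rcases hx with rfl | rfl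
      · exact Finset.mem_range.mpr (Nat.lt_succ_of_lt hij)
      · exact Finset.self_mem_range_succ _
    have hpair : ∑ k ∈ ({i, j} : Finset ℕ), (ω k).toNat * S k = S i + S j := by
      rw [Finset.sum_pair hij', hωi, hj]
      simp
    have hle : S i + S j ≤ ∑ k ∈ Finset.range (j + 1), (ω k).toNat * S k := by
      rw [← hpair]
      exact Finset.sum_le_sum_of_subset hsub
    have hge : S (j + 1) ≤ S i + S j := by
      rw [hSkey j]
      have : S (Q (j + 1)) ≤ S i := hS.monotone hQi
      omega
    exact absurd (hΩ j) (by omega)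
  · intro h j
    induction j using Nat.strong_induction_on with
    | _ j IH =>
      match j with
      | 0 =>
        have h1 : S 0 < S 1 := hS (Nat.zero_lt_one)
        have h2 : (ω 0).toNat ≤ 1 := Bool.toNat_le (ω 0)
        have h3 : ∑ i ∈ Finset.range 1, (ω i).toNat * S i = (ω 0).toNat := by
          simp [hS0]
        rw [show (0:ℕ)+1 = 1 from rfl, h3]
        omega
      | n + 1 =>
        show ∑ i ∈ Finset.range (n + 2), (ω i).toNat * S i < S (n + 2)
        rw [Finset.sum_range_succ]
        cases hc : ω (n + 1) with
        | false =>
          have := IH n (Nat.lt_succ_self n)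
          have h2 : S (n + 1) < S (n + 2) := hS (by omega)
          simp only [hc, Bool.toNat_false, zero_mul, add_zero]
          omega
        | true =>
          set q := Q (n + 2) with hqdef
          have hkey : S (n + 2) = S (n + 1) + S q := by
            simpa using hQ (n + 2) (by omega)
          have hq : q ≤ n + 1 := by
            have h2 : S (n + 2) ≤ 2 * S (n + 1) := hS2 (n + 1)
            have : S q ≤ S (n + 1) := by omega
            exact hS.le_iff_le.mp this
          have hzero : ∀ i, q ≤ i → i < n + 1 → ω i = false :=
            h (n + 1) hc
          have hsplit : ∑ k ∈ Finset.range (n + 1), (ω k).toNat * S k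
              = ∑ k ∈ Finset.range q, (ω k).toNat * S k := by
            rw [Finset.range_eq_Ico,
              ← Finset.sum_Ico_consecutive _ (Nat.zero_le q) hq]
            have : ∑ k ∈ Finset.Ico q (n + 1), (ω k).toNat * S k = 0 := by
              apply Finset.sum_eq_zero
              intro x hx
              rw [Finset.mem_Ico] at hx
              rw [hzero x hx.1 hx.2]
              simp
            rw [← Finset.range_eq_Ico]
            omega
          have hqsum : ∑ k ∈ Finset.range q, (ω k).toNat * S k < S q := by
            match q, hq with
            | 0, _ => simp [hS0]
            | m + 1, hq => exact IH m (by omega)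
          rw [hsplit]
          simp only [Bool.toNat_true, one_mul]
          omega
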